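/- Let e and l be positive integers and N a positive real number. Let a_0, …, a_{l-1} ∈ ℚ_p satisfy ‖a_i‖_p ≤ 1, and let s, s' ∈ K satisfy ‖s‖ ≤ p^{-1/e}, ‖s'‖ ≤ p^{-1/e} and ‖s - s'‖ ≤ p^{-N}. Then ‖ Σ_{i=0}^{l-1} (a_i/(i+1))·(s^{i+1} - s'^{i+1}) ‖ ≤ max_{0 ≤ i ≤ l-1} p^{-(N + i/e - ⌊log_p(i+1)⌋)}. -/

import Mathlib

/-- Precision bound for the nonnegative-degree part of a tiny Coleman integral: if the
endpoints `s, s'` agree to precision `N` and lie in the disk `‖·‖ ≤ p^{-1/e}`, then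
`Σ_{i<l} (a_i/(i+1))(s^{i+1} - s'^{i+1})` is bounded by
`max_{0 ≤ i ≤ l-1} p^{-(N + i/e - ⌊log_p(i+1)⌋)}`. -/
theorem tiny_integral_endpoint_precision {p : ℕ} [Fact p.Prime] {K : Type*} [NormedField K]
    [CompleteSpace K] [Algebra ℚ_[p] K]
    (hna : ∀ x y : K, ‖x + y‖ ≤ max ‖x‖ ‖y‖)
    (hiso : ∀ a : ℚ_[p], ‖algebraMap ℚ_[p] K a‖ = ‖a‖)
    (e l : ℕ) (he : 0 < e) (hl : 0 < l) (N : ℝ) (hN : 0 < N)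
    (a : ℕ → ℚ_[p]) (ha : ∀ i, i < l → ‖a i‖ ≤ 1)
    (s s' : K)
    (hs : ‖s‖ ≤ (p : ℝ) ^ (-(1 : ℝ) / e)) (hs' : ‖s'‖ ≤ (p : ℝ) ^ (-(1 : ℝ) / e))
    (hss' : ‖s - s'‖ ≤ (p : ℝ) ^ (-N)) :
    ‖∑ i ∈ Finset.range l,
        algebraMap ℚ_[p] K (a i / ((i : ℚ_[p]) + 1)) * (s ^ (i + 1) - s' ^ (i + 1))‖ ≤
      (Finset.range l).sup' (Finset.nonempty_range_iff.mpr hl.ne')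
        (fun i => (p : ℝ) ^ (-(N + (i : ℝ) / e - (Nat.log p (i + 1) : ℝ)))) := by
  haveI : IsUltrametricDist K :=
    IsUltrametricDist.isUltrametricDist_of_forall_norm_add_le_max_norm hna
  have hp : p.Prime := Fact.out
  have hp1 : (1:ℝ) < p := by exact_mod_cast hp.one_lt
  have hp0 : (0:ℝ) < p := lt_trans one_pos hp1
  have hb0 : (0:ℝ) ≤ (p:ℝ) ^ (-(1:ℝ)/e) := (Real.rpow_pos_of_pos hp0 _).le
  refine ((Finset.nonempty_range_iff.mpr hl.ne').norm_sum_le_sup'_norm _).trans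
    (Finset.sup'_le _ _ ?_)
  intro i hi
  refine Finset.le_sup'_of_le _ hi ?_
  rw [norm_mul, hiso]
  -- bound on the coefficient
  have hL : padicValNat p (i+1) ≤ Nat.log p (i+1) := by
    refine (Nat.le_log_iff_pow_le hp.one_lt (Nat.succ_ne_zero i)).2 ?_
    exact Nat.le_of_dvd (Nat.succ_pos i) pow_padicValNat_dvd
  have hA : ‖a i / ((i : ℚ_[p]) + 1)‖ ≤ (p:ℝ) ^ ((Nat.log p (i+1) : ℝ)) := by
    have hne0 : ((i+1 : ℕ) : ℚ_[p]) ≠ 0 := Nat.cast_ne_zero.mpr (Nat.succ_ne_zero i)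
    have hv : ‖((i+1:ℕ) : ℚ_[p])‖ = (p:ℝ) ^ (-(padicValNat p (i+1) : ℤ)) := by
      rw [Padic.norm_eq_zpow_neg_valuation hne0, Padic.valuation_natCast]
    have hcast : ((i : ℚ_[p]) + 1) = ((i+1:ℕ) : ℚ_[p]) := by push_cast; ring
    rw [hcast, norm_div, hv]
    have h1 : ‖a i‖ / (p:ℝ) ^ (-(padicValNat p (i+1) : ℤ))
        ≤ 1 / (p:ℝ) ^ (-(padicValNat p (i+1) : ℤ)) := by
      gcongr
      · exact ha i (Finset.mem_range.mp hi)
    refine h1.trans ?_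
    rw [one_div, ← zpow_neg, neg_neg]
    calc (p:ℝ) ^ ((padicValNat p (i+1) : ℤ))
        ≤ (p:ℝ) ^ ((Nat.log p (i+1) : ℤ)) := by
          apply zpow_le_zpow_right₀ hp1.le
          exact_mod_cast hL
      _ = (p:ℝ) ^ ((Nat.log p (i+1) : ℝ)) := by
          rw [← Real.rpow_intCast]
          norm_num
  -- bound on s^(i+1) - s'^(i+1)
  have hB : ‖s ^ (i+1) - s' ^ (i+1)‖ ≤ ((p:ℝ) ^ (-(1:ℝ)/e)) ^ i * (p:ℝ) ^ (-N) := by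
    have hfac : s ^ (i+1) - s' ^ (i+1)
        = (∑ j ∈ Finset.range (i+1), s ^ j * s' ^ (i + 1 - 1 - j)) * (s - s') :=
      (geom_sum₂_mul s s' (i+1)).symm
    rw [hfac, norm_mul]
    have hsum : ‖∑ j ∈ Finset.range (i+1), s ^ j * s' ^ (i + 1 - 1 - j)‖
        ≤ ((p:ℝ) ^ (-(1:ℝ)/e)) ^ i := by
      refine ((Finset.nonempty_range_iff.mpr (Nat.succ_ne_zero i)).norm_sum_le_sup'_norm
        _).trans (Finset.sup'_le _ _ ?_)
      intro j hj
      have hj' : j ≤ i := Nat.lt_succ_iff.mp (Finset.mem_range.mp hj)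
      have hij : i + 1 - 1 - j = i - j := by omega
      rw [hij, norm_mul, norm_pow, norm_pow]
      calc ‖s‖ ^ j * ‖s'‖ ^ (i - j)
          ≤ ((p:ℝ) ^ (-(1:ℝ)/e)) ^ j * ((p:ℝ) ^ (-(1:ℝ)/e)) ^ (i - j) := by
            exact mul_le_mul (pow_le_pow_left₀ (norm_nonneg s) hs j)
              (pow_le_pow_left₀ (norm_nonneg s') hs' (i - j))
              (pow_nonneg (norm_nonneg s') _) (pow_nonneg hb0 j)
        _ = ((p:ℝ) ^ (-(1:ℝ)/e)) ^ i := by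
            rw [← pow_add, Nat.add_sub_cancel' hj']
    exact mul_le_mul hsum hss' (norm_nonneg _) (pow_nonneg hb0 i)
  calc ‖a i / ((i : ℚ_[p]) + 1)‖ * ‖s ^ (i+1) - s' ^ (i+1)‖
      ≤ (p:ℝ) ^ ((Nat.log p (i+1) : ℝ)) * (((p:ℝ) ^ (-(1:ℝ)/e)) ^ i * (p:ℝ) ^ (-N)) :=
        mul_le_mul hA hB (norm_nonneg _)
          (Real.rpow_nonneg hp0.le _)
    _ = (p:ℝ) ^ (-(N + (i : ℝ)/e - (Nat.log p (i+1) : ℝ))) := by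
        rw [← Real.rpow_natCast ((p:ℝ) ^ (-(1:ℝ)/e)) i, ← Real.rpow_mul hp0.le,
          ← Real.rpow_add hp0, ← Real.rpow_add hp0]
        congr 1
        ring
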